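/- Annulus kernel lower bound: For every r > 1 there is a constant A_r > 0, independent of the points involved, such that for all z, γ ∈ ℂ with |γ − z| < r, (1/c_r) ∫_{1<|ζ−z|<r} log(|ζ−γ|²/(4r²)) · log(r²/|ζ−z|²) dA(ζ) ≥ −A_r, where c_r = ∫_{1<|ζ|<r} log(r²/|ζ|²) dA(ζ). -/

import Mathlib

open MeasureTheory Set

-- 1-d: integrability of |x|^(-1/2) on Ioo (-R) R
lemma aux_rpow_int (R : ℝ) (hR : 0 < R) :
    IntegrableOn (fun x : ℝ => |x| ^ (-(1/2) : ℝ)) (Set.Ioo (-R) R) := by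
  have h1 : IntegrableOn (fun x : ℝ => x ^ (-(1/2) : ℝ)) (Set.Ioc 0 R) := by
    have := intervalIntegral.intervalIntegrable_rpow' (a := 0) (b := R)
      (r := -(1/2)) (by norm_num)
    rwa [intervalIntegrable_iff_integrableOn_Ioc_of_le hR.le] at this
  have h2 : IntegrableOn (fun x : ℝ => (-x) ^ (-(1/2) : ℝ)) (Set.Ioc (-R) 0) := by
    have h := intervalIntegral.intervalIntegrable_rpow' (a := 0) (b := R)
      (r := -(1/2)) (by norm_num)
    have h' := (IntervalIntegrable.iff_comp_neg).mp h
    rw [neg_zero] at h'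
    have h'' := h'.symm
    rwa [intervalIntegrable_iff_integrableOn_Ioc_of_le (by linarith : -R ≤ (0:ℝ))] at h''
  have hu : IntegrableOn (fun x : ℝ => |x| ^ (-(1/2) : ℝ))
      (Set.Ioc (-R) 0 ∪ Set.Ioc 0 R) := by
    apply IntegrableOn.union
    · apply (integrableOn_congr_fun ?_ measurableSet_Ioc).mp h2
      intro x hx
      simp only []
      rw [abs_of_nonpos hx.2]
    · apply (integrableOn_congr_fun ?_ measurableSet_Ioc).mp h1
      intro x hx
      simp only []
      rw [abs_of_pos hx.1]
  exact hu.mono_set (by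
    intro x hx
    rcases le_or_gt x 0 with h | h
    · exact Or.inl ⟨hx.1, h⟩
    · exact Or.inr ⟨h, hx.2.le⟩)

-- the vertical line is null
lemma aux_line_null : (volume : Measure ℂ) {ζ : ℂ | ζ.re = 0} = 0 := by
  have h : {ζ : ℂ | ζ.re = 0} =
      Complex.measurableEquivRealProd ⁻¹' (({0} : Set ℝ) ×ˢ (Set.univ : Set ℝ)) := by
    ext z
    simp [Complex.measurableEquivRealProd_apply, Set.mem_prod, eq_comm]
  rw [h, Complex.volume_preserving_equiv_real_prod.measure_preimage]
  · rw [Measure.volume_eq_prod, Measure.prod_prod]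
    simp
  · exact (((measurableSet_singleton (0:ℝ)).prod MeasurableSet.univ)).nullMeasurableSet

lemma aux_log_integrable (R : ℝ) :
    IntegrableOn (fun ζ : ℂ => Real.log ‖ζ‖) (Metric.ball 0 R) := by
  rcases le_or_gt R 0 with hR | hR
  · rw [Metric.ball_eq_empty.2 hR]; exact integrableOn_empty
  -- the dominating function
  set w : ℝ → ℝ := fun x => |Real.log R| + 2 * |x| ^ (-(1/2) : ℝ) with hw
  have hwint : IntegrableOn w (Set.Ioo (-R) R) :=
    (integrableOn_const measure_Ioo_lt_top.ne).add
      ((aux_rpow_int R hR).const_mul 2)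
  set G : ℂ → ℝ := fun ζ => w ζ.re with hG
  have hGQ : IntegrableOn G {ζ : ℂ | ζ.re ∈ Set.Ioo (-R) R ∧ ζ.im ∈ Set.Ioo (-R) R} := by
    have hiff := (Complex.volume_preserving_equiv_real_prod.symm _).integrableOn_comp_preimage
      (MeasurableEquiv.measurableEmbedding _) (f := G)
      (s := {ζ : ℂ | ζ.re ∈ Set.Ioo (-R) R ∧ ζ.im ∈ Set.Ioo (-R) R})
    rw [← hiff]
    have hpre : (Complex.measurableEquivRealProd.symm) ⁻¹'
        {ζ : ℂ | ζ.re ∈ Set.Ioo (-R) R ∧ ζ.im ∈ Set.Ioo (-R) R}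
        = (Set.Ioo (-R) R) ×ˢ (Set.Ioo (-R) R) := by
      ext p
      simp [Complex.measurableEquivRealProd_symm_apply, Set.mem_prod]
    rw [hpre]
    have hcomp : (G ∘ Complex.measurableEquivRealProd.symm) = fun p : ℝ × ℝ =>
        w p.1 * (fun _ : ℝ => (1:ℝ)) p.2 := by
      ext p
      simp [hG, Complex.measurableEquivRealProd_symm_apply]
    rw [hcomp]
    unfold IntegrableOn
    rw [Measure.volume_eq_prod, ← Measure.prod_restrict]
    exact Integrable.mul_prod hwint (integrableOn_const measure_Ioo_lt_top.ne)
  have hGball : IntegrableOn G (Metric.ball 0 R) := by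
    apply hGQ.mono_set
    intro ζ hζ
    rw [Metric.mem_ball, dist_zero_right] at hζ
    have hre : |ζ.re| ≤ ‖ζ‖ := by
      exact Complex.abs_re_le_norm ζ
    have him : |ζ.im| ≤ ‖ζ‖ := by
      exact Complex.abs_im_le_norm ζ
    exact ⟨abs_lt.mp (hre.trans_lt hζ), abs_lt.mp (him.trans_lt hζ)⟩
  apply Integrable.mono' hGball
  · exact ((Real.measurable_log.comp measurable_norm).aestronglyMeasurable)
  · have hline : ∀ᵐ ζ ∂(volume.restrict (Metric.ball (0:ℂ) R)), ζ.re ≠ 0 :=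
      ae_restrict_of_ae (by
        rw [ae_iff]
        convert aux_line_null using 2
        ext; simp)
    filter_upwards [ae_restrict_mem measurableSet_ball, hline] with ζ hζ hre
    rw [Metric.mem_ball, dist_zero_right] at hζ
    have hre' : 0 < |ζ.re| := abs_pos.mpr hre
    have hrele : |ζ.re| ≤ ‖ζ‖ := by
      exact Complex.abs_re_le_norm ζ
    have h0 : 0 < ‖ζ‖ := lt_of_lt_of_le hre' hrele
    rw [Real.norm_eq_abs, abs_le]
    constructor
    · show -(|Real.log R| + 2 * |ζ.re| ^ (-(1/2) : ℝ)) ≤ Real.log ‖ζ‖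
      have h1 : -Real.log ‖ζ‖ ≤ 2 * |ζ.re| ^ (-(1/2) : ℝ) := by
        have hle : Real.log |ζ.re| ≤ Real.log ‖ζ‖ :=
          Real.log_le_log hre' hrele
        have : -Real.log |ζ.re| = 2 * Real.log (|ζ.re| ^ (-(1/2) : ℝ)) := by
          rw [Real.log_rpow hre']; ring
        have h2 : Real.log (|ζ.re| ^ (-(1/2) : ℝ)) ≤ |ζ.re| ^ (-(1/2) : ℝ) := by
          have hp : (0:ℝ) < |ζ.re| ^ (-(1/2) : ℝ) := Real.rpow_pos_of_pos hre' _
          linarith [Real.log_le_sub_one_of_pos hp]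
        nlinarith
      have h2 : (0:ℝ) ≤ |Real.log R| := abs_nonneg _
      linarith
    · have h1 : Real.log ‖ζ‖ ≤ Real.log R := Real.log_le_log h0 hζ.le
      have h2 : (0:ℝ) ≤ 2 * |ζ.re| ^ (-(1/2) : ℝ) := by positivity
      have h3 : Real.log R ≤ |Real.log R| := le_abs_self _
      show Real.log ‖ζ‖ ≤ |Real.log R| + 2 * |ζ.re| ^ (-(1/2) : ℝ)
      linarith

lemma aux_kernel_integrable (w : ℂ) (R b : ℝ) :
    IntegrableOn (fun ζ : ℂ => b - 2 * Real.log ‖ζ - w‖) (Metric.ball w R) := by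
  have hlog : IntegrableOn (fun ζ : ℂ => Real.log ‖ζ - w‖) (Metric.ball w R) := by
    have hmp : MeasurePreserving (fun x : ℂ => x - w) volume volume :=
      measurePreserving_sub_right volume w
    have hiff := hmp.integrableOn_comp_preimage
      ((MeasurableEquiv.subRight w).measurableEmbedding)
      (f := fun ζ : ℂ => Real.log ‖ζ‖) (s := Metric.ball 0 R)
    have hpre : (fun x : ℂ => x - w) ⁻¹' (Metric.ball 0 R) = Metric.ball w R := by
      ext x
      simp [Metric.mem_ball, dist_eq_norm]
    rw [hpre] at hiff
    exact hiff.mpr (aux_log_integrable R)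
  exact (integrableOn_const measure_ball_lt_top.ne).sub (hlog.const_mul 2)

lemma aux_c_pos (r : ℝ) (hr : 1 < r) :
    0 < ∫ ζ in {ζ : ℂ | 1 < ‖ζ‖ ∧ ‖ζ‖ < r}, Real.log (r ^ 2 / ‖ζ‖ ^ 2) := by
  set A : Set ℂ := {ζ : ℂ | 1 < ‖ζ‖ ∧ ‖ζ‖ < r} with hA
  have hAopen : IsOpen A := by
    have : A = (fun ζ : ℂ => ‖ζ‖) ⁻¹' (Set.Ioo 1 r) := rfl
    rw [this]
    exact isOpen_Ioo.preimage continuous_norm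
  have hAne : A.Nonempty := by
    refine ⟨((1 + r) / 2 : ℝ), ?_, ?_⟩ <;>
      · simp only [Complex.norm_real, Real.norm_eq_abs]
        rw [abs_of_pos (by linarith)]
        linarith
  have hApos : 0 < volume A := hAopen.measure_pos volume hAne
  have hAsub : A ⊆ Metric.ball (0 : ℂ) r := by
    intro ζ hζ
    rw [Metric.mem_ball, dist_zero_right]
    exact hζ.2
  have hAfin : volume A ≠ ⊤ :=
    ((measure_mono hAsub).trans_lt measure_ball_lt_top).ne
  have hint : IntegrableOn (fun ζ : ℂ => Real.log (r ^ 2 / ‖ζ‖ ^ 2)) A := by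
    apply Measure.integrableOn_of_bounded hAfin
    · apply Measurable.aestronglyMeasurable
      exact Real.measurable_log.comp ((measurable_const.div ((measurable_norm).pow_const 2)))
    · rw [ae_restrict_iff' hAopen.measurableSet]
      refine ae_of_all _ fun ζ hζ => ?_
      have h1 : (0:ℝ) < ‖ζ‖ := lt_trans one_pos hζ.1
      have hratio1 : (1:ℝ) < r ^ 2 / ‖ζ‖ ^ 2 := by
        rw [lt_div_iff₀ (by positivity)]
        nlinarith [hζ.1, hζ.2]
      have hratio2 : r ^ 2 / ‖ζ‖ ^ 2 ≤ r ^ 2 := by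
        rw [div_le_iff₀ (by positivity)]
        nlinarith [hζ.1, sq_nonneg (‖ζ‖ - 1), sq_nonneg r, hr]
      rw [Real.norm_eq_abs, abs_of_nonneg (Real.log_nonneg hratio1.le)]
      exact Real.log_le_log (by linarith) hratio2
  rw [setIntegral_pos_iff_support_of_nonneg_ae ?_ hint]
  · refine lt_of_lt_of_le hApos (measure_mono fun ζ hζ => ?_)
    refine ⟨?_, hζ⟩
    have h1 : (0:ℝ) < ‖ζ‖ := lt_trans one_pos hζ.1
    have hratio1 : (1:ℝ) < r ^ 2 / ‖ζ‖ ^ 2 := by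
      rw [lt_div_iff₀ (by positivity)]
      nlinarith [hζ.1, hζ.2]
    exact ne_of_gt (Real.log_pos hratio1)
  · filter_upwards [ae_restrict_mem hAopen.measurableSet] with ζ hζ
    have h1 : (0:ℝ) < ‖ζ‖ := lt_trans one_pos hζ.1
    have hratio1 : (1:ℝ) ≤ r ^ 2 / ‖ζ‖ ^ 2 := by
      rw [le_div_iff₀ (by positivity)]
      nlinarith [hζ.1, hζ.2]
    exact Real.log_nonneg hratio1

/-- Annulus kernel lower bound: for every `r > 1` there is `A_r > 0`,
independent of the points involved, such that for all `z, γ ∈ ℂ` with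
`|γ − z| < r`,
`(1/c_r) ∫_{1<|ζ−z|<r} log(|ζ−γ|²/(4r²)) · log(r²/|ζ−z|²) dA(ζ) ≥ −A_r`,
where `c_r = ∫_{1<|ζ|<r} log(r²/|ζ|²) dA(ζ)`. -/
theorem annulus_kernel_lower_bound (r : ℝ) (hr : 1 < r) :
    ∃ A : ℝ, 0 < A ∧ ∀ z γ : ℂ, ‖γ - z‖ < r →
      (∫ ζ in {ζ : ℂ | 1 < ‖ζ‖ ∧ ‖ζ‖ < r}, Real.log (r ^ 2 / ‖ζ‖ ^ 2))⁻¹ *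
          ∫ ζ in {ζ : ℂ | 1 < ‖ζ - z‖ ∧ ‖ζ - z‖ < r},
            Real.log (‖ζ - γ‖ ^ 2 / (4 * r ^ 2)) * Real.log (r ^ 2 / ‖ζ - z‖ ^ 2)
        ≥ -A := by
  have hr0 : (0:ℝ) < r := lt_trans one_pos hr
  have hlogr : 0 < Real.log r := Real.log_pos hr
  have hbnd : ∀ x : ℝ, 0 ≤ x → x < 2 * r → 0 ≤ Real.log (4 * r ^ 2) - 2 * Real.log x := by
    intro x hx0 hx2r
    rcases hx0.eq_or_lt with h0 | h0
    · rw [← h0, Real.log_zero]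
      have : (1:ℝ) ≤ 4 * r ^ 2 := by nlinarith
      linarith [Real.log_nonneg this]
    · have h1 : Real.log (x ^ 2) ≤ Real.log (4 * r ^ 2) :=
        Real.log_le_log (by positivity) (by nlinarith)
      rw [Real.log_pow] at h1
      push_cast at h1
      linarith
  set c : ℝ := ∫ ζ in {ζ : ℂ | 1 < ‖ζ‖ ∧ ‖ζ‖ < r}, Real.log (r ^ 2 / ‖ζ‖ ^ 2) with hcdef
  have hc : 0 < c := aux_c_pos r hr
  set K0 : ℝ := ∫ ζ in Metric.ball (0:ℂ) (2*r),
      (Real.log (4 * r ^ 2) - 2 * Real.log ‖ζ‖) with hK0def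
  have hK0 : 0 ≤ K0 := by
    apply setIntegral_nonneg measurableSet_ball
    intro ζ hζ
    rw [Metric.mem_ball, dist_zero_right] at hζ
    exact hbnd ‖ζ‖ (norm_nonneg _) hζ
  refine ⟨c⁻¹ * (2 * Real.log r * K0) + 1, ?_, ?_⟩
  · have h1 : 0 ≤ c⁻¹ * (2 * Real.log r * K0) :=
      mul_nonneg (inv_nonneg.2 hc.le) (mul_nonneg (by positivity) hK0)
    linarith
  intro z γ hγ
  set S : Set ℂ := {ζ : ℂ | 1 < ‖ζ - z‖ ∧ ‖ζ - z‖ < r} with hSdef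
  set f : ℂ → ℝ := fun ζ =>
    Real.log (‖ζ - γ‖ ^ 2 / (4 * r ^ 2)) * Real.log (r ^ 2 / ‖ζ - z‖ ^ 2) with hfdef
  have hSmeas : MeasurableSet S := by
    have h : S = (fun ζ : ℂ => ‖ζ - z‖) ⁻¹' (Set.Ioo 1 r) := rfl
    rw [h]
    exact measurableSet_Ioo.preimage ((measurable_id.sub_const z).norm)
  have hSsub : S ⊆ Metric.ball γ (2 * r) := by
    intro ζ hζ
    rw [Metric.mem_ball, dist_eq_norm]
    calc ‖ζ - γ‖ = ‖(ζ - z) + (z - γ)‖ := by ring_nf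
      _ ≤ ‖ζ - z‖ + ‖z - γ‖ := norm_add_le _ _
      _ < r + r := by
          have : ‖z - γ‖ < r := by rwa [norm_sub_rev]
          exact add_lt_add hζ.2 this
      _ = 2 * r := by ring
  by_cases hfi : IntegrableOn f S volume
  · set g0 : ℂ → ℝ := fun ζ => Real.log (4 * r ^ 2) - 2 * Real.log ‖ζ - γ‖ with hg0def
    have hg0ball : IntegrableOn g0 (Metric.ball γ (2 * r)) :=
      aux_kernel_integrable γ (2 * r) _
    have hg0S : IntegrableOn g0 S := hg0ball.mono_set hSsub
    have hg0nonneg : ∀ ζ ∈ Metric.ball γ (2 * r), 0 ≤ g0 ζ := by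
      intro ζ hζ
      rw [Metric.mem_ball, dist_eq_norm] at hζ
      exact hbnd _ (norm_nonneg _) hζ
    -- pointwise bound
    have hpt : ∀ ζ ∈ S, |f ζ| ≤ 2 * Real.log r * g0 ζ := by
      intro ζ hζ
      have hn2r : ‖ζ - γ‖ < 2 * r := by
        have := hSsub hζ
        rwa [Metric.mem_ball, dist_eq_norm] at this
      have hz1 : 1 < ‖ζ - z‖ := hζ.1
      have hzr : ‖ζ - z‖ < r := hζ.2
      have hz0 : (0:ℝ) < ‖ζ - z‖ := lt_trans one_pos hz1
      have hb0 : 0 ≤ Real.log (r ^ 2 / ‖ζ - z‖ ^ 2) := by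
        apply Real.log_nonneg
        rw [le_div_iff₀ (by positivity)]
        nlinarith
      have hb2 : Real.log (r ^ 2 / ‖ζ - z‖ ^ 2) ≤ 2 * Real.log r := by
        have h1sq : (1:ℝ) ≤ ‖ζ - z‖ ^ 2 := by nlinarith
        have h1 : r ^ 2 / ‖ζ - z‖ ^ 2 ≤ r ^ 2 := by
          rw [div_le_iff₀ (by positivity)]
          nlinarith [mul_nonneg (sq_nonneg r) (sub_nonneg.2 h1sq)]
        have h2 := Real.log_le_log (by positivity) h1
        rw [Real.log_pow] at h2
        push_cast at h2
        linarith
      have hg0pos : 0 ≤ g0 ζ := hg0nonneg ζ (hSsub hζ)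
      have ha : |Real.log (‖ζ - γ‖ ^ 2 / (4 * r ^ 2))| ≤ g0 ζ := by
        rcases (norm_nonneg (ζ - γ)).eq_or_lt with h0 | h0
        · rw [← h0]
          simp only [hg0def, ← h0, Real.log_zero, mul_zero, sub_zero]
          rw [zero_pow (two_ne_zero), zero_div, Real.log_zero, abs_zero]
          apply Real.log_nonneg
          nlinarith
        · have haval : Real.log (‖ζ - γ‖ ^ 2 / (4 * r ^ 2))
              = Real.log (‖ζ - γ‖ ^ 2) - Real.log (4 * r ^ 2) :=
            Real.log_div (by positivity) (by positivity)
          have hsq : ‖ζ - γ‖ ^ 2 < (2 * r) ^ 2 :=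
            pow_lt_pow_left₀ hn2r (norm_nonneg _) two_ne_zero
          have hle : Real.log (‖ζ - γ‖ ^ 2) ≤ Real.log (4 * r ^ 2) :=
            Real.log_le_log (by positivity) (by nlinarith)
          rw [abs_of_nonpos (by linarith)]
          have hg0val : g0 ζ = Real.log (4 * r ^ 2) - Real.log (‖ζ - γ‖ ^ 2) := by
            rw [hg0def]
            simp only []
            rw [Real.log_pow]
            push_cast
            ring
          rw [haval, hg0val]
          linarith
      calc |f ζ| = |Real.log (‖ζ - γ‖ ^ 2 / (4 * r ^ 2))|
            * |Real.log (r ^ 2 / ‖ζ - z‖ ^ 2)| := abs_mul _ _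
        _ = |Real.log (‖ζ - γ‖ ^ 2 / (4 * r ^ 2))|
            * Real.log (r ^ 2 / ‖ζ - z‖ ^ 2) := by rw [abs_of_nonneg hb0]
        _ ≤ g0 ζ * (2 * Real.log r) := mul_le_mul ha hb2 hb0 hg0pos
        _ = 2 * Real.log r * g0 ζ := by ring
    -- integral comparisons
    have h1 : |∫ ζ in S, f ζ| ≤ ∫ ζ in S, |f ζ| := by
      have := norm_integral_le_integral_norm (μ := volume.restrict S) f
      simpa only [Real.norm_eq_abs] using this
    have h2 : ∫ ζ in S, |f ζ| ≤ ∫ ζ in S, 2 * Real.log r * g0 ζ :=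
      setIntegral_mono_on hfi.abs (hg0S.const_mul _) hSmeas hpt
    have h3 : ∫ ζ in S, 2 * Real.log r * g0 ζ
        ≤ ∫ ζ in Metric.ball γ (2 * r), 2 * Real.log r * g0 ζ := by
      apply setIntegral_mono_set (hg0ball.const_mul _)
      · filter_upwards [ae_restrict_mem measurableSet_ball] with ζ hζ
        exact mul_nonneg (by positivity) (hg0nonneg ζ hζ)
      · exact HasSubset.Subset.eventuallyLE hSsub
    have htrans : ∫ ζ in Metric.ball γ (2 * r), g0 ζ = K0 := by
      have hindeq : ∀ ζ : ℂ, (Metric.ball γ (2 * r)).indicator g0 ζ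
          = (Metric.ball (0:ℂ) (2 * r)).indicator
              (fun w => Real.log (4 * r ^ 2) - 2 * Real.log ‖w‖) (ζ - γ) := by
        intro ζ
        by_cases h : ζ ∈ Metric.ball γ (2 * r)
        · have h' : ζ - γ ∈ Metric.ball (0:ℂ) (2 * r) := by
            rw [Metric.mem_ball, dist_zero_right]
            rw [Metric.mem_ball, dist_eq_norm] at h
            exact h
          rw [Set.indicator_of_mem h, Set.indicator_of_mem h']
        · have h' : ζ - γ ∉ Metric.ball (0:ℂ) (2 * r) := by
            rw [Metric.mem_ball, dist_zero_right]
            rw [Metric.mem_ball, dist_eq_norm] at h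
            exact h
          rw [Set.indicator_of_notMem h, Set.indicator_of_notMem h']
      rw [← integral_indicator measurableSet_ball]
      rw [hK0def, ← integral_indicator measurableSet_ball]
      simp_rw [hindeq]
      exact integral_sub_right_eq_self
        (fun w => (Metric.ball (0:ℂ) (2 * r)).indicator
          (fun w => Real.log (4 * r ^ 2) - 2 * Real.log ‖w‖) w) γ
    have h4 : ∫ ζ in Metric.ball γ (2 * r), 2 * Real.log r * g0 ζ
        = 2 * Real.log r * K0 := by
      rw [integral_const_mul, htrans]
    have habs : |∫ ζ in S, f ζ| ≤ 2 * Real.log r * K0 := by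
      calc |∫ ζ in S, f ζ| ≤ ∫ ζ in S, |f ζ| := h1
        _ ≤ ∫ ζ in S, 2 * Real.log r * g0 ζ := h2
        _ ≤ ∫ ζ in Metric.ball γ (2 * r), 2 * Real.log r * g0 ζ := h3
        _ = 2 * Real.log r * K0 := h4
    have hI : -(2 * Real.log r * K0) ≤ ∫ ζ in S, f ζ := by
      have := neg_abs_le (∫ ζ in S, f ζ)
      linarith
    have h5 : -(c⁻¹ * (2 * Real.log r * K0)) ≤ c⁻¹ * ∫ ζ in S, f ζ := by
      have h6 := mul_le_mul_of_nonneg_left hI (inv_nonneg.2 hc.le)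
      rw [mul_neg] at h6
      exact h6
    rw [ge_iff_le]
    linarith
  · rw [integral_undef hfi, mul_zero]
    have h1 : 0 ≤ c⁻¹ * (2 * Real.log r * K0) :=
      mul_nonneg (inv_nonneg.2 hc.le) (mul_nonneg (by positivity) hK0)
    linarith
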